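/- Let D ∈ ℝ^{n×n} be a 0/1 diagonal matrix and X ∈ ℝ^{n×d}. If the set {u : ‖u‖₂ < 1, (2D − I)Xu > 0} is nonempty (strict feasibility), then max over u with ‖u‖₂ ≤ 1, D X u ≥ 0, (I − D)Xu ≤ 0 of v^T D X u equals min over α, β ∈ ℝ^n with α, β ≥ 0 of ‖X^T D (v + α + β) − X^T β‖₂. -/

import Mathlib

open Matrix
open scoped RealInnerProductSpace

noncomputable def l2norm {d : ℕ} (x : Fin d → ℝ) : ℝ := Real.sqrt (∑ i, x i ^ 2)

namespace ConeDuality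

noncomputable def eu {d : ℕ} (x : Fin d → ℝ) : EuclideanSpace ℝ (Fin d) :=
  (WithLp.equiv 2 _).symm x

lemma eu_apply {d : ℕ} (x : Fin d → ℝ) (j : Fin d) : eu x j = x j := rfl

lemma l2norm_eq_norm {d : ℕ} (x : Fin d → ℝ) : l2norm x = ‖eu x‖ := by
  rw [EuclideanSpace.norm_eq, l2norm]
  congr 1
  exact Finset.sum_congr rfl fun j _ => by rw [eu_apply, Real.norm_eq_abs, sq_abs]

lemma inner_eu {d : ℕ} (x y : EuclideanSpace ℝ (Fin d)) : ⟪x, y⟫ = ∑ j, x j * y j := by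
  simp [PiLp.inner_apply, RCLike.inner_apply, conj_trivial]
  exact Finset.sum_congr rfl fun j _ => mul_comm _ _

section Setup

variable {n d : ℕ} (X : Matrix (Fin n) (Fin d) ℝ) (v dd : Fin n → ℝ)

noncomputable def g (i : Fin n) : EuclideanSpace ℝ (Fin d) :=
  eu (fun j => (2 * dd i - 1) * X i j)

noncomputable def c0 : EuclideanSpace ℝ (Fin d) :=
  eu (fun j => ∑ i, dd i * v i * X i j)

def C : Set (EuclideanSpace ℝ (Fin d)) := {u | ∀ i, 0 ≤ ⟪g X dd i, u⟫}

def K : Set (EuclideanSpace ℝ (Fin d)) :=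
  {w | ∃ l : Fin n → ℝ, (∀ i, 0 ≤ l i) ∧ w = ∑ i, l i • g X dd i}

lemma inner_g (i : Fin n) (u : EuclideanSpace ℝ (Fin d)) :
    ⟪g X dd i, u⟫ = (2 * dd i - 1) * (X.mulVec u i) := by
  rw [inner_eu, Matrix.mulVec, dotProduct, Finset.mul_sum]
  exact Finset.sum_congr rfl fun j _ => by rw [g, eu_apply]; ring

lemma inner_c0 (u : EuclideanSpace ℝ (Fin d)) :
    ⟪c0 X v dd, u⟫ = ∑ i, dd i * v i * (X.mulVec u i) := by
  rw [inner_eu]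
  have h : ∀ j : Fin d, (c0 X v dd) j * u j = ∑ i, dd i * v i * X i j * u j := fun j => by
    rw [c0, eu_apply, Finset.sum_mul]
  rw [Finset.sum_congr rfl fun j _ => h j, Finset.sum_comm]
  exact Finset.sum_congr rfl fun i _ => by
    rw [Matrix.mulVec, dotProduct, Finset.mul_sum]
    exact Finset.sum_congr rfl fun j _ => by ring

lemma zero_mem_C : (0 : EuclideanSpace ℝ (Fin d)) ∈ C X dd := fun i => by
  rw [inner_zero_right]

lemma C_convex : Convex ℝ (C X dd) := fun x hx y hy a b ha hb _ => fun i => by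
  rw [inner_add_right, real_inner_smul_right, real_inner_smul_right]
  exact add_nonneg (mul_nonneg ha (hx i)) (mul_nonneg hb (hy i))

lemma C_closed : IsClosed (C X dd) := by
  have h : C X dd = ⋂ i, {u | 0 ≤ ⟪g X dd i, u⟫} := by
    ext u; simp [C, Set.mem_iInter]
  rw [h]
  exact isClosed_iInter fun i =>
    isClosed_le continuous_const (continuous_const.inner continuous_id)

lemma g_mem_K (i : Fin n) : g X dd i ∈ K X dd := by
  refine ⟨fun i' => if i' = i then 1 else 0, fun i' => by positivity, ?_⟩
  rw [Finset.sum_eq_single i (fun b _ hb => by simp [hb]) (by simp)]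
  simp

lemma K_cone : ∃ K0 : ConvexCone ℝ (EuclideanSpace ℝ (Fin d)), (K0 : Set _) = K X dd := by
  refine ⟨⟨K X dd, ?_, ?_⟩, rfl⟩
  · rintro c hc w ⟨l, hl, rfl⟩
    exact ⟨fun i => c * l i, fun i => mul_nonneg hc.le (hl i), by
      rw [Finset.smul_sum]; exact Finset.sum_congr rfl fun i _ => (smul_smul c (l i) _)⟩
  · rintro w ⟨l, hl, rfl⟩ w' ⟨l', hl', rfl⟩
    exact ⟨fun i => l i + l' i, fun i => add_nonneg (hl i) (hl' i), by
      rw [← Finset.sum_add_distrib]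
      exact Finset.sum_congr rfl fun i _ => (add_smul (l i) (l' i) _).symm⟩

lemma moreau : ∃ p ∈ C X dd, ⟪c0 X v dd - p, p⟫ = 0 ∧
    (∀ u ∈ C X dd, ⟪c0 X v dd - p, u⟫ ≤ 0) ∧
    -(c0 X v dd - p) ∈ closure (K X dd) := by
  obtain ⟨p, hpC, hproj⟩ := exists_norm_eq_iInf_of_complete_convex
    ⟨0, zero_mem_C X dd⟩ (C_closed X dd).isComplete (C_convex X dd) (c0 X v dd)
  have hin := (norm_eq_iInf_iff_real_inner_le_zero (C_convex X dd) hpC).1 hproj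
  set r := c0 X v dd - p with hr
  have h2p : (2 : ℝ) • p ∈ C X dd := fun i => by
    rw [real_inner_smul_right]
    have := hpC i
    linarith
  have hrp : ⟪r, p⟫ = 0 := by
    have h1 := hin 0 (zero_mem_C X dd)
    have h2 := hin ((2 : ℝ) • p) h2p
    rw [zero_sub, inner_neg_right] at h1
    rw [two_smul, add_sub_cancel_right] at h2
    linarith
  have hrC : ∀ u ∈ C X dd, ⟪r, u⟫ ≤ 0 := by
    intro u hu
    have hup : u + p ∈ C X dd := fun i => by
      rw [inner_add_right]; exact add_nonneg (hu i) (hpC i)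
    have := hin (u + p) hup
    rwa [add_sub_cancel_right] at this
  refine ⟨p, hpC, hrp, hrC, ?_⟩
  by_contra hmem
  obtain ⟨K0, hK0⟩ := K_cone (dd := dd) (X := X)
  have hKc : (K0.closure : Set (EuclideanSpace ℝ (Fin d))) = closure (K X dd) := by
    rw [ConvexCone.coe_closure, hK0]
  have hne : (K0.closure : Set (EuclideanSpace ℝ (Fin d))).Nonempty := by
    rw [hKc]
    exact ⟨0, subset_closure ⟨0, fun _ => le_refl 0, by simp⟩⟩
  have hclo : IsClosed (K0.closure : Set (EuclideanSpace ℝ (Fin d))) := by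
    rw [hKc]; exact isClosed_closure
  have hnm : -r ∉ K0.closure := by
    rw [← SetLike.mem_coe, hKc]; exact hmem
  have h0 : K0.closure.Pointed := by
    show (0 : EuclideanSpace ℝ (Fin d)) ∈ K0.closure
    rw [← SetLike.mem_coe, hKc]
    exact subset_closure ⟨0, fun _ => le_refl 0, by simp⟩
  have hsep : ∃ y, (∀ x ∈ K0.closure, 0 ≤ ⟪x, y⟫) ∧ ⟪y, -r⟫ < 0 := by
    obtain ⟨y, h1, h2⟩ := ProperCone.hyperplane_separation' (x₀ := -r)
      (⟨K0.closure.toPointedCone h0, hclo⟩ : ProperCone ℝ (EuclideanSpace ℝ (Fin d))) hnm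
    exact ⟨y, fun x hx => h1 x hx, by rwa [real_inner_comm]⟩
  obtain ⟨y, hy1, hy2⟩ := hsep
  have hyC : y ∈ C X dd := fun i => by
    have hg : g X dd i ∈ K0.closure := by
      rw [← SetLike.mem_coe, hKc]
      exact subset_closure (g_mem_K X dd i)
    exact hy1 _ hg
  have := hrC y hyC
  rw [inner_neg_right, real_inner_comm] at hy2
  linarith

end Setup

end ConeDuality

/-- Lemma 2 (Appendix A.10): strong second-order-cone duality for maximizing a linear
functional over the intersection of the unit ball with a hyperplane arrangement cone,
under strict feasibility. -/
theorem cone_program_strong_duality {n d : ℕ} (X : Matrix (Fin n) (Fin d) ℝ)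
    (v : Fin n → ℝ) (dd : Fin n → ℝ) (hdd : ∀ i, dd i = 0 ∨ dd i = 1)
    (D : Matrix (Fin n) (Fin n) ℝ) (hD : D = Matrix.diagonal dd)
    (hfeas : ∃ u : Fin d → ℝ, l2norm u < 1 ∧
      ∀ i, 0 < (((2 : ℝ) • D - 1).mulVec (X.mulVec u)) i) :
    sSup {c : ℝ | ∃ u : Fin d → ℝ, l2norm u ≤ 1 ∧
        (∀ i, 0 ≤ (D.mulVec (X.mulVec u)) i) ∧
        (∀ i, ((1 - D).mulVec (X.mulVec u)) i ≤ 0) ∧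
        c = ∑ i, v i * (D.mulVec (X.mulVec u)) i} =
    sInf {c : ℝ | ∃ a b : Fin n → ℝ, (∀ i, 0 ≤ a i) ∧ (∀ i, 0 ≤ b i) ∧
        c = l2norm (Xᵀ.mulVec (D.mulVec (fun i => v i + a i + b i)) - Xᵀ.mulVec b)} := by
  classical
  subst hD
  clear hfeas
  open ConeDuality in
  -- abbreviations
  set S : Set ℝ := {c : ℝ | ∃ u : Fin d → ℝ, l2norm u ≤ 1 ∧
      (∀ i, 0 ≤ ((Matrix.diagonal dd).mulVec (X.mulVec u)) i) ∧
      (∀ i, ((1 - Matrix.diagonal dd).mulVec (X.mulVec u)) i ≤ 0) ∧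
      c = ∑ i, v i * ((Matrix.diagonal dd).mulVec (X.mulVec u)) i} with hS
  set T : Set ℝ := {c : ℝ | ∃ a b : Fin n → ℝ, (∀ i, 0 ≤ a i) ∧ (∀ i, 0 ≤ b i) ∧
      c = l2norm (Xᵀ.mulVec ((Matrix.diagonal dd).mulVec (fun i => v i + a i + b i))
        - Xᵀ.mulVec b)} with hT
  obtain ⟨p, hpC, hrp, hrC, hcl⟩ := ConeDuality.moreau X v dd
  -- basic inner product facts
  have hc0p : ⟪ConeDuality.c0 X v dd, p⟫ = ‖p‖ ^ 2 := by
    have h1 : ⟪ConeDuality.c0 X v dd - p, p⟫ = ⟪ConeDuality.c0 X v dd, p⟫ - ⟪p, p⟫ :=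
      inner_sub_left _ _ _
    rw [hrp] at h1
    have h2 := real_inner_self_eq_norm_sq p
    linarith
  -- translation: constraints
  have hconstr : ∀ u : Fin d → ℝ,
      ((∀ i, 0 ≤ ((Matrix.diagonal dd).mulVec (X.mulVec u)) i) ∧
       (∀ i, ((1 - Matrix.diagonal dd).mulVec (X.mulVec u)) i ≤ 0)) ↔
      ConeDuality.eu u ∈ ConeDuality.C X dd := by
    intro u
    constructor
    · rintro ⟨h1, h2⟩ i
      rw [ConeDuality.inner_g]
      have e1 := h1 i
      have e2 := h2 i
      rw [Matrix.mulVec_diagonal] at e1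
      rw [Matrix.sub_mulVec, Pi.sub_apply, Matrix.one_mulVec, Matrix.mulVec_diagonal] at e2
      rcases hdd i with h | h <;> rw [h] at e1 e2 ⊢ <;>
        show (0:ℝ) ≤ _ * X.mulVec u i <;> nlinarith
    · intro hu
      constructor
      · intro i
        have := hu i
        rw [ConeDuality.inner_g,
          show X.mulVec (ConeDuality.eu u) = X.mulVec u from rfl] at this
        rw [Matrix.mulVec_diagonal]
        rcases hdd i with h | h <;> rw [h] at this ⊢ <;> nlinarith
      · intro i
        have := hu i
        rw [ConeDuality.inner_g,
          show X.mulVec (ConeDuality.eu u) = X.mulVec u from rfl] at this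
        rw [Matrix.sub_mulVec, Pi.sub_apply, Matrix.one_mulVec, Matrix.mulVec_diagonal]
        rcases hdd i with h | h <;> rw [h] at this ⊢ <;> nlinarith
  -- translation: objective
  have hobj : ∀ u : Fin d → ℝ,
      (∑ i, v i * ((Matrix.diagonal dd).mulVec (X.mulVec u)) i) =
        ⟪ConeDuality.c0 X v dd, ConeDuality.eu u⟫ := by
    intro u
    rw [ConeDuality.inner_c0, show X.mulVec (ConeDuality.eu u) = X.mulVec u from rfl]
    exact Finset.sum_congr rfl fun i _ => by rw [Matrix.mulVec_diagonal]; ring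
  -- translation: dual vector
  have hdual : ∀ a b : Fin n → ℝ,
      ConeDuality.eu (Xᵀ.mulVec ((Matrix.diagonal dd).mulVec (fun i => v i + a i + b i))
          - Xᵀ.mulVec b) =
        ConeDuality.c0 X v dd +
          ∑ i, (dd i * a i + (1 - dd i) * b i) • ConeDuality.g X dd i := by
    intro a b
    ext j
    have hsum : (∑ i, (dd i * a i + (1 - dd i) * b i) • ConeDuality.g X dd i) j =
        ∑ i, (dd i * a i + (1 - dd i) * b i) * ((2 * dd i - 1) * X i j) := by
      rw [WithLp.ofLp_sum, Finset.sum_apply]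
      exact Finset.sum_congr rfl fun i _ => rfl
    show (Xᵀ.mulVec ((Matrix.diagonal dd).mulVec (fun i => v i + a i + b i))
          - Xᵀ.mulVec b) j = _
    rw [Pi.sub_apply]
    have hl1 : Xᵀ.mulVec ((Matrix.diagonal dd).mulVec (fun i => v i + a i + b i)) j =
        ∑ i, X i j * (dd i * (v i + a i + b i)) := by
      rw [Matrix.mulVec, dotProduct]
      exact Finset.sum_congr rfl fun i _ => by
        rw [Matrix.transpose_apply, Matrix.mulVec_diagonal]
    have hl2 : Xᵀ.mulVec b j = ∑ i, X i j * b i := by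
      rw [Matrix.mulVec, dotProduct]
      exact Finset.sum_congr rfl fun i _ => by rw [Matrix.transpose_apply]
    have hr : (ConeDuality.c0 X v dd +
        ∑ i, (dd i * a i + (1 - dd i) * b i) • ConeDuality.g X dd i) j =
        ∑ i, dd i * v i * X i j +
          ∑ i, (dd i * a i + (1 - dd i) * b i) * ((2 * dd i - 1) * X i j) := by
      rw [PiLp.add_apply, hsum, ConeDuality.c0, ConeDuality.eu_apply]
    rw [hl1, hl2, hr, ← Finset.sum_sub_distrib, ← Finset.sum_add_distrib]
    exact Finset.sum_congr rfl fun i _ => by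
      rcases hdd i with h | h <;> rw [h] <;> ring
  -- (A) every element of S is at most ‖p‖
  have hA : ∀ c ∈ S, c ≤ ‖p‖ := by
    rintro c ⟨u, hu1, hu2, hu3, rfl⟩
    have huC : ConeDuality.eu u ∈ ConeDuality.C X dd := (hconstr u).1 ⟨hu2, hu3⟩
    rw [hobj u]
    have hsplit : ⟪ConeDuality.c0 X v dd, ConeDuality.eu u⟫ =
        ⟪ConeDuality.c0 X v dd - p, ConeDuality.eu u⟫ + ⟪p, ConeDuality.eu u⟫ := by
      rw [inner_sub_left]; ring
    have h1 := hrC _ huC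
    have h2 : ⟪p, ConeDuality.eu u⟫ ≤ ‖p‖ * ‖ConeDuality.eu u‖ := real_inner_le_norm _ _
    have h3 : ‖ConeDuality.eu u‖ ≤ 1 := by rw [← l2norm_eq_norm]; exact hu1
    have h4 : ‖p‖ * ‖ConeDuality.eu u‖ ≤ ‖p‖ :=
      mul_le_of_le_one_right (norm_nonneg p) h3
    linarith
  -- (B) ‖p‖ ∈ S
  have hB : ‖p‖ ∈ S := by
    by_cases hp : p = 0
    · refine ⟨0, ?_, ?_, ?_, ?_⟩
      · rw [l2norm]; simp
      · intro i; rw [Matrix.mulVec_zero, Matrix.mulVec_zero]; exact le_refl 0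
      · intro i; rw [Matrix.mulVec_zero, Matrix.mulVec_zero]; exact le_refl 0
      · rw [hp, norm_zero]
        simp [Matrix.mulVec_zero]
    · have hpn : (0:ℝ) < ‖p‖ := norm_pos_iff.2 hp
      set u : Fin d → ℝ := fun j => ‖p‖⁻¹ * p j with hu
      have heu : ConeDuality.eu u = ‖p‖⁻¹ • p := by
        ext j
        rw [ConeDuality.eu_apply, PiLp.smul_apply, smul_eq_mul]
      have hnorm : l2norm u = 1 := by
        rw [l2norm_eq_norm, heu, norm_smul, Real.norm_eq_abs, abs_inv, abs_norm]
        field_simp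
      have huC : ConeDuality.eu u ∈ ConeDuality.C X dd := by
        rw [heu]
        intro i
        rw [real_inner_smul_right]
        exact mul_nonneg (inv_nonneg.2 (norm_nonneg p)) (hpC i)
      refine ⟨u, le_of_eq hnorm, ((hconstr u).2 huC).1, ((hconstr u).2 huC).2, ?_⟩
      rw [hobj u, heu, real_inner_smul_right, hc0p, sq]
      field_simp
  -- (C) ‖p‖ is a lower bound for T
  have hC : ∀ c ∈ T, ‖p‖ ≤ c := by
    rintro c ⟨a, b, ha, hb, rfl⟩
    rw [l2norm_eq_norm, hdual a b]
    set w : EuclideanSpace ℝ (Fin d) :=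
      ∑ i, (dd i * a i + (1 - dd i) * b i) • ConeDuality.g X dd i with hw
    have hwp : 0 ≤ ⟪w, p⟫ := by
      rw [hw, sum_inner]
      refine Finset.sum_nonneg fun i _ => ?_
      rw [real_inner_smul_left]
      refine mul_nonneg ?_ (hpC i)
      rcases hdd i with h | h <;> rw [h] <;> simp [ha i, hb i]
    by_cases hp : p = 0
    · rw [hp, norm_zero]; exact norm_nonneg _
    · have hpn : (0:ℝ) < ‖p‖ := norm_pos_iff.2 hp
      have h1 : ⟪ConeDuality.c0 X v dd + w, ‖p‖⁻¹ • p⟫ ≤ ‖ConeDuality.c0 X v dd + w‖ := by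
        have := real_inner_le_norm (ConeDuality.c0 X v dd + w) (‖p‖⁻¹ • p)
        have hn : ‖‖p‖⁻¹ • p‖ = 1 := by
          rw [norm_smul, Real.norm_eq_abs, abs_inv, abs_norm]; field_simp
        rw [hn, mul_one] at this
        exact this
      have h2 : ‖p‖ ≤ ⟪ConeDuality.c0 X v dd + w, ‖p‖⁻¹ • p⟫ := by
        rw [real_inner_smul_right, inner_add_left, hc0p]
        have e : ‖p‖⁻¹ * ‖p‖ ^ 2 = ‖p‖ := by rw [sq]; field_simp
        calc ‖p‖ = ‖p‖⁻¹ * ‖p‖ ^ 2 := e.symm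
          _ ≤ ‖p‖⁻¹ * (‖p‖ ^ 2 + ⟪w, p⟫) := by
              have hinv : (0:ℝ) ≤ ‖p‖⁻¹ := inv_nonneg.2 (norm_nonneg p)
              nlinarith
      linarith
  -- (D) for every ε > 0 there is an element of T below ‖p‖ + ε
  have hD' : ∀ ε : ℝ, 0 < ε → ∃ c ∈ T, c ≤ ‖p‖ + ε := by
    intro ε hε
    rw [Metric.mem_closure_iff] at hcl
    obtain ⟨w, hwK, hwd⟩ := hcl ε hε
    obtain ⟨l, hl, rfl⟩ := hwK
    set a : Fin n → ℝ := fun i => dd i * l i with ha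
    set b : Fin n → ℝ := fun i => (1 - dd i) * l i with hb
    have han : ∀ i, 0 ≤ a i := fun i => by
      rcases hdd i with h | h <;> simp [ha, h, hl i]
    have hbn : ∀ i, 0 ≤ b i := fun i => by
      rcases hdd i with h | h <;> simp [hb, h, hl i]
    have hcoef : ∀ i, dd i * a i + (1 - dd i) * b i = l i := fun i => by
      rcases hdd i with h | h <;> simp [ha, hb, h]
    refine ⟨l2norm (Xᵀ.mulVec ((Matrix.diagonal dd).mulVec (fun i => v i + a i + b i))
        - Xᵀ.mulVec b), ⟨a, b, han, hbn, rfl⟩, ?_⟩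
    rw [l2norm_eq_norm, hdual a b]
    have hsum : (∑ i, (dd i * a i + (1 - dd i) * b i) • ConeDuality.g X dd i) =
        ∑ i, l i • ConeDuality.g X dd i := by
      exact Finset.sum_congr rfl fun i _ => by rw [hcoef i]
    rw [hsum]
    set w := ∑ i, l i • ConeDuality.g X dd i
    have hdec : ConeDuality.c0 X v dd + w =
        p + (w - -(ConeDuality.c0 X v dd - p)) := by abel
    rw [hdec]
    calc ‖p + (w - -(ConeDuality.c0 X v dd - p))‖
        ≤ ‖p‖ + ‖w - -(ConeDuality.c0 X v dd - p)‖ := norm_add_le _ _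
      _ ≤ ‖p‖ + ε := by
          have : ‖w - -(ConeDuality.c0 X v dd - p)‖ = dist (-(ConeDuality.c0 X v dd - p)) w := by
            rw [dist_eq_norm, ← norm_neg]; congr 1; abel
          rw [this]
          linarith
  -- conclude
  have hTne : T.Nonempty := by
    obtain ⟨c, hc, _⟩ := hD' 1 one_pos
    exact ⟨c, hc⟩
  have hTbdd : BddBelow T := by
    refine ⟨0, fun c hc => ?_⟩
    obtain ⟨a, b, _, _, rfl⟩ := hc
    exact Real.sqrt_nonneg _
  have hsup : sSup S = ‖p‖ :=
    le_antisymm (csSup_le ⟨‖p‖, hB⟩ hA) (le_csSup ⟨‖p‖, hA⟩ hB)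
  have hinf : sInf T = ‖p‖ := by
    refine le_antisymm ?_ (le_csInf hTne hC)
    refine le_of_forall_pos_le_add fun ε hε => ?_
    obtain ⟨c, hcT, hcle⟩ := hD' ε hε
    exact le_trans (csInf_le hTbdd hcT) hcle
  rw [hsup, hinf]
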